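/- Let H be a real inner product space, C ⊆ H nonempty convex with diameter at most D, and F : H → ℝ differentiable with gradient ∇F satisfying F(y) ≤ F(x) + ⟪∇F(x), y − x⟫ + (L/2)·‖y − x‖² for all x, y ∈ H, where L ≥ 0. Fix γ ∈ (0,1), β with 0 ≤ β ≤ 1−γ, and η ∈ [0,1]. Let ḡ : ℕ → H be any sequence and define: x₁ ∈ C with x₀ := x₁; g₀ = 0 and, for t ≥ 1, g_t = (1−γ)·g_{t-1} + γ·ḡ_t; ĝ_t = (β/(1−γ))·g_t + (1 − β/(1−γ))·ḡ_t; u_t ∈ C with ⟪u_t, ĝ_t⟫ ≤ ⟪v, ĝ_t⟫ for all v ∈ C; and x_{t+1} = (1−η)·x_t + η·u_t. Define ζ_s := ḡ_s − ∇F(x_s) and Z_s := ∇F(x_{s-1}) − ∇F(x_s). Then for every τ ≥ 1: η·∑_{t=1}^τ 𝒢(x_t) + F(x_{τ+1}) ≤ F(x₁) + (L·τ·η²·D²)/2 + (η·D·β/γ)·‖∇F(x₁)‖ + (η·D·β/(1−γ))·∑_{t=1}^τ [ (1−γ)·‖∑_{s=1}^t (1−γ)^{t−s}·Z_s‖ +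 γ·‖∑_{s=1}^t (1−γ)^{t−s}·ζ_s‖ ] + η·D·(1 − β/(1−γ))·∑_{t=1}^τ ‖ζ_t‖, where 𝒢(x) := sup_{v ∈ C} ⟪v − x, −∇F(x)⟫. -/

import Mathlib

open scoped RealInnerProductSpace

set_option maxHeartbeats 1000000

/-- Deterministic master inequality (Lemma C.5, Tail-Gap) for stochastic Frank–Wolfe
with constant step size `η` and momentum parameters `γ`, `β`, applied to arbitrary
realized stochastic gradients `ḡ_t`. -/
theorem sfw_tail_gap_inequality
    {H : Type*} [NormedAddCommGroup H] [InnerProductSpace ℝ H]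
    (C : Set H) (hCne : C.Nonempty) (hCconv : Convex ℝ C) (D : ℝ)
    (hdiam : ∀ a ∈ C, ∀ b ∈ C, ‖a - b‖ ≤ D)
    (F : H → ℝ) (F' : H → H) (L : ℝ) (hL : 0 ≤ L)
    (hdiff : ∀ z : H, HasFDerivAt F (innerSL ℝ (F' z)) z)
    (hsmooth : ∀ x y : H, F y ≤ F x + ⟪F' x, y - x⟫ + L / 2 * ‖y - x‖ ^ 2)
    (γ β η : ℝ) (hγ : γ ∈ Set.Ioo (0 : ℝ) 1) (hβ : 0 ≤ β) (hβγ : β ≤ 1 - γ)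
    (hη : η ∈ Set.Icc (0 : ℝ) 1)
    (gbar : ℕ → H)
    (x : ℕ → H) (hx1 : x 1 ∈ C) (hx01 : x 0 = x 1)
    (g ghat u : ℕ → H)
    (hg0 : g 0 = 0)
    (hg : ∀ t, 1 ≤ t → g t = (1 - γ) • g (t - 1) + γ • gbar t)
    (hghat : ∀ t, 1 ≤ t →
      ghat t = (β / (1 - γ)) • g t + (1 - β / (1 - γ)) • gbar t)
    (hu_mem : ∀ t, 1 ≤ t → u t ∈ C)
    (hu_min : ∀ t, 1 ≤ t → ∀ v ∈ C, ⟪u t, ghat t⟫ ≤ ⟪v, ghat t⟫)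
    (hxrec : ∀ t, 1 ≤ t → x (t + 1) = (1 - η) • x t + η • u t)
    (Z ζ : ℕ → H)
    (hZ : ∀ s, 1 ≤ s → Z s = F' (x (s - 1)) - F' (x s))
    (hζ : ∀ s, 1 ≤ s → ζ s = gbar s - F' (x s)) :
    ∀ τ : ℕ, 1 ≤ τ →
      η * (∑ t ∈ Finset.Icc 1 τ,
          sSup ((fun v => ⟪v - x t, -F' (x t)⟫) '' C)) + F (x (τ + 1)) ≤
        F (x 1) + L * τ * η ^ 2 * D ^ 2 / 2
          + (η * D * β / γ) * ‖F' (x 1)‖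
          + (η * D * β / (1 - γ)) * ∑ t ∈ Finset.Icc 1 τ,
              ((1 - γ) * ‖∑ s ∈ Finset.Icc 1 t, (1 - γ) ^ (t - s) • Z s‖
                + γ * ‖∑ s ∈ Finset.Icc 1 t, (1 - γ) ^ (t - s) • ζ s‖)
          + η * D * (1 - β / (1 - γ)) * ∑ t ∈ Finset.Icc 1 τ, ‖ζ t‖ := by
  
  obtain ⟨hγ0, hγ1⟩ := hγ
  obtain ⟨hη0, hη1⟩ := hη
  set c : ℝ := 1 - γ with hc_def
  have hc0 : 0 < c := by rw [hc_def]; linarith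
  have hcne : c ≠ 0 := ne_of_gt hc0
  have hγne : γ ≠ 0 := ne_of_gt hγ0
  obtain ⟨a0, ha0⟩ := hCne
  have hD : 0 ≤ D := by
    have := hdiam a0 ha0 a0 ha0
    simpa using this
  have hβc : 0 ≤ β / c := div_nonneg hβ hc0.le
  have hβc1 : 0 ≤ 1 - β / c := by
    have : β / c ≤ 1 := (div_le_one hc0).mpr hβγ
    linarith
  -- membership of iterates
  have hxC : ∀ t, 1 ≤ t → x t ∈ C := by
    intro t
    induction t with
    | zero => intro h; omega
    | succ n ih =>
      intro _
      rcases Nat.eq_zero_or_pos n with hn | hn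
      · subst hn; exact hx1
      · rw [hxrec n hn]
        exact hCconv (ih hn) (hu_mem n hn) (by linarith) hη0 (by ring)
  -- per-step inequality
  have hstep : ∀ t, 1 ≤ t →
      η * sSup ((fun v => ⟪v - x t, -F' (x t)⟫) '' C) + F (x (t+1)) ≤
        F (x t) + L * η ^ 2 * D ^ 2 / 2 + η * D * ‖ghat t - F' (x t)‖ := by
    intro t ht
    have hxt : x t ∈ C := hxC t ht
    have hut : u t ∈ C := hu_mem t ht
    have hdx : x (t+1) - x t = η • (u t - x t) := by
      rw [hxrec t ht]; module
    have hnd : ‖u t - x t‖ ≤ D := hdiam (u t) hut (x t) hxt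
    have hn0 : 0 ≤ ‖u t - x t‖ := norm_nonneg _
    have hsm := hsmooth (x t) (x (t+1))
    rw [hdx, real_inner_smul_right] at hsm
    have hnsm : ‖η • (u t - x t)‖ = η * ‖u t - x t‖ := by
      rw [norm_smul, Real.norm_eq_abs, abs_of_nonneg hη0]
    rw [hnsm] at hsm
    have hgap : sSup ((fun v => ⟪v - x t, -F' (x t)⟫) '' C) ≤
        -⟪F' (x t), u t - x t⟫ + D * ‖ghat t - F' (x t)‖ := by
      apply csSup_le (Set.Nonempty.image _ ⟨a0, ha0⟩)
      rintro b ⟨v, hv, rfl⟩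
      have h1 : ⟪u t, ghat t⟫ ≤ ⟪v, ghat t⟫ := hu_min t ht v hv
      have h2 : ⟪ghat t, u t - v⟫ ≤ 0 := by
        rw [inner_sub_right]
        have e1 := real_inner_comm (u t) (ghat t)
        have e2 := real_inner_comm v (ghat t)
        linarith [h1, e1, e2]
      have h3 : ⟪F' (x t) - ghat t, u t - v⟫ ≤ ‖ghat t - F' (x t)‖ * ‖u t - v‖ := by
        calc ⟪F' (x t) - ghat t, u t - v⟫ ≤ ‖F' (x t) - ghat t‖ * ‖u t - v‖ :=
              real_inner_le_norm _ _
          _ = ‖ghat t - F' (x t)‖ * ‖u t - v‖ := by rw [norm_sub_rev]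
      have h4 : ‖u t - v‖ ≤ D := hdiam (u t) hut v hv
      have h4' : 0 ≤ ‖u t - v‖ := norm_nonneg _
      have hen : 0 ≤ ‖ghat t - F' (x t)‖ := norm_nonneg _
      have hsplit : ⟪F' (x t), u t - v⟫ = ⟪ghat t, u t - v⟫ + ⟪F' (x t) - ghat t, u t - v⟫ := by
        rw [← inner_add_left]
        congr 1
        abel
      have h5 : ⟪F' (x t), u t - v⟫ ≤ D * ‖ghat t - F' (x t)‖ := by
        rw [hsplit]
        nlinarith [mul_le_mul_of_nonneg_left h4 hen]
      have hv1 : ⟪v - x t, -F' (x t)⟫ = -⟪F' (x t), v - x t⟫ := by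
        rw [inner_neg_right, real_inner_comm]
      have hv2 : ⟪F' (x t), u t - x t⟫ = ⟪F' (x t), u t - v⟫ + ⟪F' (x t), v - x t⟫ := by
        rw [← inner_add_right]
        congr 1
        abel
      simp only [hv1]
      linarith
    have hsq : (η * ‖u t - x t‖) ^ 2 ≤ (η * D) ^ 2 :=
      pow_le_pow_left₀ (mul_nonneg hη0 hn0) (mul_le_mul_of_nonneg_left hnd hη0) 2
    have hsq' : L / 2 * (η * ‖u t - x t‖) ^ 2 ≤ L / 2 * (η * D) ^ 2 :=
      mul_le_mul_of_nonneg_left hsq (by linarith)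
    have hmul := mul_le_mul_of_nonneg_left hgap hη0
    nlinarith [hsm, hmul, hsq']
  -- telescoped inequality
  have hsum : ∀ τ : ℕ,
      η * (∑ t ∈ Finset.Icc 1 τ, sSup ((fun v => ⟪v - x t, -F' (x t)⟫) '' C)) + F (x (τ+1)) ≤
        F (x 1) + (τ : ℝ) * (L * η ^ 2 * D ^ 2 / 2)
          + η * D * ∑ t ∈ Finset.Icc 1 τ, ‖ghat t - F' (x t)‖ := by
    intro τ
    induction τ with
    | zero => simp
    | succ n ih =>
      rw [Finset.sum_Icc_succ_top (by omega : 1 ≤ n+1),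
        Finset.sum_Icc_succ_top (by omega : 1 ≤ n+1)]
      have hst := hstep (n+1) (by omega)
      push_cast
      linarith [ih, hst]
  -- closed form for the momentum error
  have heps : ∀ t : ℕ, g t - F' (x t) =
      (c ^ t) • (-(F' (x 1))) +
        ∑ s ∈ Finset.Icc 1 t, (c ^ (t - s)) • (c • Z s + γ • ζ s) := by
    intro t
    induction t with
    | zero =>
      rw [hg0, hx01]
      simp
    | succ n ih =>
      have h1 : g (n+1) = c • g n + γ • gbar (n+1) := by
        simpa using hg (n+1) (by omega)
      have hZ1 : Z (n+1) = F' (x n) - F' (x (n+1)) := by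
        simpa using hZ (n+1) (by omega)
      have hζ1 : ζ (n+1) = gbar (n+1) - F' (x (n+1)) := hζ (n+1) (by omega)
      have key : g (n+1) - F' (x (n+1)) =
          c • (g n - F' (x n)) + (c • Z (n+1) + γ • ζ (n+1)) := by
        rw [h1, hZ1, hζ1, hc_def]
        module
      have hsum_eq : ∑ s ∈ Finset.Icc 1 n, (c ^ (n+1 - s)) • (c • Z s + γ • ζ s)
          = c • ∑ s ∈ Finset.Icc 1 n, (c ^ (n - s)) • (c • Z s + γ • ζ s) := by
        rw [Finset.smul_sum]
        apply Finset.sum_congr rfl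
        intro s hs
        have hsle : s ≤ n := (Finset.mem_Icc.mp hs).2
        rw [smul_smul]
        congr 1
        have : n + 1 - s = (n - s) + 1 := by omega
        rw [this, pow_succ]
        ring
      rw [key, ih, Finset.sum_Icc_succ_top (by omega : 1 ≤ n+1), hsum_eq]
      simp only [Nat.sub_self, pow_zero, one_smul]
      module
  -- norm bound for the momentum error
  have hepsnorm : ∀ t : ℕ, ‖g t - F' (x t)‖ ≤
      c ^ t * ‖F' (x 1)‖ +
        (c * ‖∑ s ∈ Finset.Icc 1 t, c ^ (t - s) • Z s‖
          + γ * ‖∑ s ∈ Finset.Icc 1 t, c ^ (t - s) • ζ s‖) := by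
    intro t
    rw [heps t]
    have hsplit : ∑ s ∈ Finset.Icc 1 t, (c ^ (t - s)) • (c • Z s + γ • ζ s)
        = c • ∑ s ∈ Finset.Icc 1 t, c ^ (t - s) • Z s
          + γ • ∑ s ∈ Finset.Icc 1 t, c ^ (t - s) • ζ s := by
      rw [Finset.smul_sum, Finset.smul_sum, ← Finset.sum_add_distrib]
      apply Finset.sum_congr rfl
      intro s _
      rw [smul_add, smul_comm (c ^ (t - s)) c, smul_comm (c ^ (t - s)) γ]
    rw [hsplit]
    calc ‖(c ^ t) • (-(F' (x 1))) +
          (c • ∑ s ∈ Finset.Icc 1 t, c ^ (t - s) • Z s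
            + γ • ∑ s ∈ Finset.Icc 1 t, c ^ (t - s) • ζ s)‖
        ≤ ‖(c ^ t) • (-(F' (x 1)))‖ +
          (‖c • ∑ s ∈ Finset.Icc 1 t, c ^ (t - s) • Z s‖
            + ‖γ • ∑ s ∈ Finset.Icc 1 t, c ^ (t - s) • ζ s‖) := by
          refine (norm_add_le _ _).trans ?_
          exact add_le_add le_rfl (norm_add_le _ _)
      _ = c ^ t * ‖F' (x 1)‖ +
          (c * ‖∑ s ∈ Finset.Icc 1 t, c ^ (t - s) • Z s‖
            + γ * ‖∑ s ∈ Finset.Icc 1 t, c ^ (t - s) • ζ s‖) := by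
          rw [norm_smul, norm_smul, norm_smul, norm_neg]
          rw [Real.norm_eq_abs, Real.norm_eq_abs, Real.norm_eq_abs,
            abs_of_pos hc0, abs_of_pos hγ0, abs_of_nonneg (pow_nonneg hc0.le t)]
  -- decomposition of the LMO-gradient error
  have he_dec : ∀ t, 1 ≤ t → ‖ghat t - F' (x t)‖ ≤
      (β / c) * ‖g t - F' (x t)‖ + (1 - β / c) * ‖ζ t‖ := by
    intro t ht
    have h1 : ghat t - F' (x t)
        = (β / c) • (g t - F' (x t)) + (1 - β / c) • (ζ t) := by
      rw [hghat t ht, hζ t ht]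
      module
    rw [h1]
    calc ‖(β / c) • (g t - F' (x t)) + (1 - β / c) • (ζ t)‖
        ≤ ‖(β / c) • (g t - F' (x t))‖ + ‖(1 - β / c) • (ζ t)‖ := norm_add_le _ _
      _ = (β / c) * ‖g t - F' (x t)‖ + (1 - β / c) * ‖ζ t‖ := by
          rw [norm_smul, norm_smul, Real.norm_eq_abs, Real.norm_eq_abs,
            abs_of_nonneg hβc, abs_of_nonneg hβc1]
  -- geometric sum bound
  have hγc : γ = 1 - c := by rw [hc_def]; ring
  have hgeomkey : ∀ τ : ℕ, ∑ t ∈ Finset.Icc 1 τ, c ^ t = (c - c ^ (τ+1)) / γ := by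
    intro τ
    induction τ with
    | zero => simp
    | succ n ih =>
      rw [Finset.sum_Icc_succ_top (by omega : 1 ≤ n+1), ih, hγc]
      have h1c : (1 : ℝ) - c ≠ 0 := by rw [← hγc]; exact hγne
      field_simp
      ring
  have hgeom : ∀ τ : ℕ, ∑ t ∈ Finset.Icc 1 τ, c ^ t ≤ c / γ := by
    intro τ
    rw [hgeomkey τ]
    have h1 : (0:ℝ) ≤ c ^ (τ+1) := pow_nonneg hc0.le _
    have h2 : c - c ^ (τ+1) ≤ c := by linarith
    gcongr
  -- final assembly
  intro τ hτ
  have H1 := hsum τ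
  have HN : 0 ≤ ‖F' (x 1)‖ := norm_nonneg _
  have H2 : ∑ t ∈ Finset.Icc 1 τ, ‖ghat t - F' (x t)‖ ≤
      (β / c) * ‖F' (x 1)‖ * (c / γ)
        + (β / c) * ∑ t ∈ Finset.Icc 1 τ,
            (c * ‖∑ s ∈ Finset.Icc 1 t, c ^ (t - s) • Z s‖
              + γ * ‖∑ s ∈ Finset.Icc 1 t, c ^ (t - s) • ζ s‖)
        + (1 - β / c) * ∑ t ∈ Finset.Icc 1 τ, ‖ζ t‖ := by
    calc ∑ t ∈ Finset.Icc 1 τ, ‖ghat t - F' (x t)‖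
        ≤ ∑ t ∈ Finset.Icc 1 τ,
            ((β / c) * ‖F' (x 1)‖ * c ^ t
              + (β / c) * (c * ‖∑ s ∈ Finset.Icc 1 t, c ^ (t - s) • Z s‖
                  + γ * ‖∑ s ∈ Finset.Icc 1 t, c ^ (t - s) • ζ s‖)
              + (1 - β / c) * ‖ζ t‖) := by
          apply Finset.sum_le_sum
          intro t ht
          have ht1 : 1 ≤ t := (Finset.mem_Icc.mp ht).1
          have hd := he_dec t ht1
          have hn := hepsnorm t
          have := mul_le_mul_of_nonneg_left hn hβc
          linarith [this, hd]
      _ = (β / c) * ‖F' (x 1)‖ * (∑ t ∈ Finset.Icc 1 τ, c ^ t)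
            + (β / c) * ∑ t ∈ Finset.Icc 1 τ,
                (c * ‖∑ s ∈ Finset.Icc 1 t, c ^ (t - s) • Z s‖
                  + γ * ‖∑ s ∈ Finset.Icc 1 t, c ^ (t - s) • ζ s‖)
            + (1 - β / c) * ∑ t ∈ Finset.Icc 1 τ, ‖ζ t‖ := by
          rw [Finset.sum_add_distrib, Finset.sum_add_distrib,
            ← Finset.mul_sum, ← Finset.mul_sum, ← Finset.mul_sum]
      _ ≤ (β / c) * ‖F' (x 1)‖ * (c / γ)
            + (β / c) * ∑ t ∈ Finset.Icc 1 τ,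
                (c * ‖∑ s ∈ Finset.Icc 1 t, c ^ (t - s) • Z s‖
                  + γ * ‖∑ s ∈ Finset.Icc 1 t, c ^ (t - s) • ζ s‖)
            + (1 - β / c) * ∑ t ∈ Finset.Icc 1 τ, ‖ζ t‖ := by
          have := mul_le_mul_of_nonneg_left (hgeom τ) (mul_nonneg hβc HN)
          linarith [this]
  have hηD : 0 ≤ η * D := mul_nonneg hη0 hD
  have H3 := mul_le_mul_of_nonneg_left H2 hηD
  have Heq : η * D * ((β / c) * ‖F' (x 1)‖ * (c / γ)
        + (β / c) * ∑ t ∈ Finset.Icc 1 τ,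
            (c * ‖∑ s ∈ Finset.Icc 1 t, c ^ (t - s) • Z s‖
              + γ * ‖∑ s ∈ Finset.Icc 1 t, c ^ (t - s) • ζ s‖)
        + (1 - β / c) * ∑ t ∈ Finset.Icc 1 τ, ‖ζ t‖)
      = (η * D * β / γ) * ‖F' (x 1)‖
        + (η * D * β / c) * ∑ t ∈ Finset.Icc 1 τ,
            (c * ‖∑ s ∈ Finset.Icc 1 t, c ^ (t - s) • Z s‖
              + γ * ‖∑ s ∈ Finset.Icc 1 t, c ^ (t - s) • ζ s‖)
        + η * D * (1 - β / c) * ∑ t ∈ Finset.Icc 1 τ, ‖ζ t‖ := by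
    have key : ∀ SA Sζ N : ℝ, η * D * ((β / c) * N * (c / γ)
          + (β / c) * SA + (1 - β / c) * Sζ)
        = (η * D * β / γ) * N + (η * D * β / c) * SA + η * D * (1 - β / c) * Sζ := by
      intro SA Sζ N
      field_simp
    exact key _ _ _
  have Hτ : (τ : ℝ) * (L * η ^ 2 * D ^ 2 / 2) = L * τ * η ^ 2 * D ^ 2 / 2 := by ring
  linarith [H1, H3, Heq, Hτ]
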